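/- Let G be an (r,s)-directed hypergraph with anadiplosis components G₁,...,G_k, and suppose r/p + s/q ≥ 1. Then λ_{p,q}(G) = max_{1≤i≤k} λ_{p,q}(G_i). -/

import Mathlib

/-- An `(r,s)`-directed hypergraph with tail vertices `Fin m`, head vertices
`Fin n`, and arcs indexed by a type `E`. -/
structure DirHypergraph (m n : ℕ) (E : Type) (r s : ℕ) where
  tail : E → Finset (Fin m)
  head : E → Finset (Fin n)
  tail_card : ∀ e, (tail e).card = r
  head_card : ∀ e, (head e).card = s

namespace DirHypergraph

noncomputable def pnorm {k : ℕ} (p : ℝ) (x : Fin k → ℝ) : ℝ :=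
  (∑ i, |x i| ^ p) ^ (1 / p)

variable {m n r s : ℕ} {E : Type} [Fintype E]

noncomputable def polyForm (G : DirHypergraph m n E r s)
    (x : Fin m → ℝ) (y : Fin n → ℝ) : ℝ :=
  ∑ e, (∏ u ∈ G.tail e, x u) * ∏ v ∈ G.head e, y v

noncomputable def specRad (G : DirHypergraph m n E r s) (p q : ℝ) : ℝ :=
  sSup {z | ∃ x y, pnorm p x = 1 ∧ pnorm q y = 1 ∧ z = G.polyForm x y}

/-- Membership of a vertex (tail copy `Sum.inl` / head copy `Sum.inr`) in an arc. -/
def memArc (G : DirHypergraph m n E r s) : (Fin m ⊕ Fin n) → E → Prop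
  | Sum.inl u, e => u ∈ G.tail e
  | Sum.inr v, e => v ∈ G.head e

/-- Two vertices are adjacent when some arc contains both. -/
def adj (G : DirHypergraph m n E r s) (a b : Fin m ⊕ Fin n) : Prop :=
  ∃ e, G.memArc a e ∧ G.memArc b e

/-- Anadiplosis connectedness, expressed as connectedness of the underlying
hypergraph of the bipartite split. -/
def Connected (G : DirHypergraph m n E r s) : Prop :=
  ∀ a b, (∃ e, G.memArc a e) → (∃ e, G.memArc b e) →
    Relation.ReflTransGen G.adj a b

/-- The subhypergraph formed by the arcs in class `i` of the partition `c`. -/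
def restrict {N k : ℕ} (G : DirHypergraph m n (Fin N) r s)
    (c : Fin N → Fin k) (i : Fin k) :
    DirHypergraph m n {e : Fin N // c e = i} r s where
  tail e := G.tail e.1
  head e := G.head e.1
  tail_card e := G.tail_card e.1
  head_card e := G.head_card e.1

end DirHypergraph

namespace DirHypergraph

variable {m n r s : ℕ} {E : Type} [Fintype E]

lemma rpow_le_rpow_exp_ge {a θ α : ℝ} (ha : 0 ≤ a) (ha1 : a ≤ 1) (hθ : 0 ≤ θ) (h : θ ≤ α) :
    a ^ α ≤ a ^ θ := by
  rcases eq_or_lt_of_le hθ with hθ0 | hθ0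
  · rw [← hθ0, Real.rpow_zero]
    exact Real.rpow_le_one ha ha1 (hθ0 ▸ h)
  rcases eq_or_lt_of_le ha with ha0 | ha0
  · rw [← ha0, Real.zero_rpow (by linarith), Real.zero_rpow (by linarith)]
  · exact Real.rpow_le_rpow_of_exponent_ge ha0 ha1 h

lemma young_aux {a b α β : ℝ} (ha : 0 ≤ a) (ha1 : a ≤ 1) (hb : 0 ≤ b) (hb1 : b ≤ 1)
    (hα : 0 ≤ α) (hβ : 0 ≤ β) (hαβ : 1 ≤ α + β) :
    a ^ α * b ^ β ≤ α / (α + β) * a + β / (α + β) * b := by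
  have hs : 0 < α + β := lt_of_lt_of_le one_pos hαβ
  have hθ : 0 ≤ α / (α + β) := div_nonneg hα hs.le
  have hφ : 0 ≤ β / (α + β) := div_nonneg hβ hs.le
  have hθφ : α / (α + β) + β / (α + β) = 1 := by
    rw [← add_div, div_self hs.ne']
  have hθα : α / (α + β) ≤ α := by
    rw [div_le_iff₀ hs]; nlinarith
  have hφβ : β / (α + β) ≤ β := by
    rw [div_le_iff₀ hs]; nlinarith
  calc a ^ α * b ^ β ≤ a ^ (α / (α + β)) * b ^ (β / (α + β)) :=
        mul_le_mul (rpow_le_rpow_exp_ge ha ha1 hθ hθα)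
          (rpow_le_rpow_exp_ge hb hb1 hφ hφβ)
          (Real.rpow_nonneg hb _) (Real.rpow_nonneg ha _)
    _ ≤ _ := Real.geom_mean_le_arith_mean2_weighted hθ hφ ha hb hθφ

lemma sum_of_pnorm_one {k : ℕ} {p : ℝ} (hp : 1 ≤ p) {x : Fin k → ℝ}
    (h : pnorm p x = 1) : ∑ i, |x i| ^ p = 1 := by
  have hp0 : p ≠ 0 := by linarith
  have hS : 0 ≤ ∑ i, |x i| ^ p :=
    Finset.sum_nonneg fun i _ => Real.rpow_nonneg (abs_nonneg _) _
  have h2 := congrArg (· ^ p) h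
  simp only [pnorm] at h2
  rw [← Real.rpow_mul hS, one_div_mul_cancel hp0, Real.rpow_one, Real.one_rpow] at h2
  exact h2

def uvec (k : ℕ) (hk : 0 < k) : Fin k → ℝ := fun u => if u = ⟨0, hk⟩ then 1 else 0

lemma pnorm_uvec {k : ℕ} (hk : 0 < k) {p : ℝ} (hp : 1 ≤ p) : pnorm p (uvec k hk) = 1 := by
  have hp0 : p ≠ 0 := by linarith
  unfold pnorm uvec
  have h : ∀ u : Fin k, |if u = ⟨0, hk⟩ then (1:ℝ) else 0| ^ p
      = if u = ⟨0, hk⟩ then (1:ℝ) else 0 := by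
    intro u
    by_cases h : u = ⟨0, hk⟩ <;> simp [h, Real.zero_rpow hp0]
  rw [Finset.sum_congr rfl fun u _ => h u]
  simp

lemma abs_le_one_of_pnorm_one {k : ℕ} {p : ℝ} (hp : 1 ≤ p) {x : Fin k → ℝ}
    (h : pnorm p x = 1) (u : Fin k) : |x u| ≤ 1 := by
  have hp0 : 0 < p := lt_of_lt_of_le one_pos hp
  have h1 : |x u| ^ p ≤ 1 := by
    rw [← sum_of_pnorm_one hp h]
    exact Finset.single_le_sum (fun i _ => Real.rpow_nonneg (abs_nonneg _) _)
      (Finset.mem_univ u)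
  by_contra hgt
  push_neg at hgt
  have : (1:ℝ) < |x u| ^ p := by
    calc (1:ℝ) = 1 ^ p := (Real.one_rpow p).symm
      _ < |x u| ^ p := Real.rpow_lt_rpow (by norm_num) hgt hp0
  linarith

lemma polyForm_le_card (G : DirHypergraph m n E r s) {p q : ℝ} (hp : 1 ≤ p) (hq : 1 ≤ q)
    {x : Fin m → ℝ} {y : Fin n → ℝ} (hx : pnorm p x = 1) (hy : pnorm q y = 1) :
    G.polyForm x y ≤ Fintype.card E := by
  unfold polyForm
  calc ∑ e, (∏ u ∈ G.tail e, x u) * ∏ v ∈ G.head e, y v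
      ≤ ∑ _e : E, (1:ℝ) := by
        apply Finset.sum_le_sum
        intro e _
        calc (∏ u ∈ G.tail e, x u) * ∏ v ∈ G.head e, y v
            ≤ |(∏ u ∈ G.tail e, x u) * ∏ v ∈ G.head e, y v| := le_abs_self _
          _ = (∏ u ∈ G.tail e, |x u|) * ∏ v ∈ G.head e, |y v| := by
              rw [abs_mul, Finset.abs_prod, Finset.abs_prod]
          _ ≤ 1 * 1 := by
              apply mul_le_mul
              · exact Finset.prod_le_one (fun u _ => abs_nonneg _)
                  (fun u _ => abs_le_one_of_pnorm_one hp hx u)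
              · exact Finset.prod_le_one (fun v _ => abs_nonneg _)
                  (fun v _ => abs_le_one_of_pnorm_one hq hy v)
              · exact Finset.prod_nonneg fun v _ => abs_nonneg _
              · norm_num
          _ = 1 := one_mul 1
    _ = Fintype.card E := by simp

lemma bddAbove_spec (G : DirHypergraph m n E r s) {p q : ℝ} (hp : 1 ≤ p) (hq : 1 ≤ q) :
    BddAbove {z | ∃ x y, pnorm p x = 1 ∧ pnorm q y = 1 ∧ z = G.polyForm x y} := by
  refine ⟨Fintype.card E, ?_⟩
  rintro z ⟨x, y, hx, hy, rfl⟩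
  exact G.polyForm_le_card hp hq hx hy

lemma specRad_nonneg (G : DirHypergraph m n E r s) (hm : 0 < m) (hn : 0 < n)
    {p q : ℝ} (hp : 1 ≤ p) (hq : 1 ≤ q) : 0 ≤ G.specRad p q := by
  have hmem : G.polyForm (uvec m hm) (uvec n hn) ∈
      {z | ∃ x y, pnorm p x = 1 ∧ pnorm q y = 1 ∧ z = G.polyForm x y} :=
    ⟨_, _, pnorm_uvec hm hp, pnorm_uvec hn hq, rfl⟩
  have h0 : 0 ≤ G.polyForm (uvec m hm) (uvec n hn) := by
    apply Finset.sum_nonneg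
    intro e _
    apply mul_nonneg <;> apply Finset.prod_nonneg <;> intro u _ <;>
      · unfold uvec; split <;> norm_num
  exact h0.trans (le_csSup (G.bddAbove_spec hp hq) hmem)

lemma exists_scaled {k r : ℕ} (hk : 0 < k) {p : ℝ} (hp : 1 ≤ p) (x : Fin k → ℝ)
    (h0 : (∑ u, |x u| ^ p) = 0 → r = 0) :
    ∃ x' : Fin k → ℝ, pnorm p x' = 1 ∧
      (∀ t : Finset (Fin k), t.card = r →
        ∏ u ∈ t, x u = (∑ u, |x u| ^ p) ^ ((r : ℝ) / p) * ∏ u ∈ t, x' u) ∧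
      (r ≠ 0 → ∀ u, x u = 0 → x' u = 0) := by
  have hp0 : 0 < p := lt_of_lt_of_le one_pos hp
  set A := ∑ u, |x u| ^ p with hA
  have hA0 : 0 ≤ A := Finset.sum_nonneg fun u _ => Real.rpow_nonneg (abs_nonneg _) _
  by_cases hAz : A = 0
  · refine ⟨uvec k hk, pnorm_uvec hk hp, ?_, fun hr => absurd (h0 hAz) hr⟩
    intro t ht
    have hr := h0 hAz
    subst hr
    rw [Finset.card_eq_zero] at ht
    subst ht
    simp
  · have hApos : 0 < A := lt_of_le_of_ne hA0 (Ne.symm hAz)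
    set t0 := A ^ (1 / p) with ht0def
    have ht0 : 0 < t0 := Real.rpow_pos_of_pos hApos _
    have ht0p : t0 ^ p = A := by
      rw [ht0def, ← Real.rpow_mul hA0, one_div_mul_cancel hp0.ne', Real.rpow_one]
    refine ⟨fun u => x u / t0, ?_, ?_, ?_⟩
    · unfold pnorm
      have h : ∀ u, |x u / t0| ^ p = |x u| ^ p / A := by
        intro u
        rw [abs_div, abs_of_pos ht0, Real.div_rpow (abs_nonneg _) ht0.le, ht0p]
      rw [Finset.sum_congr rfl fun u _ => h u, ← Finset.sum_div, ← hA,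
        div_self hAz, Real.one_rpow]
    · intro t ht
      have htr : t0 ^ (r : ℕ) = A ^ ((r : ℝ) / p) := by
        rw [← Real.rpow_natCast t0 r, ht0def, ← Real.rpow_mul hA0]
        congr 1
        ring
      rw [Finset.prod_div_distrib, Finset.prod_const, ht, htr]
      field_simp
    · intro _ u hu
      simp [hu]

/-- The key scaling bound. -/
lemma polyForm_le (G : DirHypergraph m n E r s) (hm : 0 < m) (hn : 0 < n)
    {p q : ℝ} (hp : 1 ≤ p) (hq : 1 ≤ q) (x : Fin m → ℝ) (y : Fin n → ℝ) :
    G.polyForm x y ≤ G.specRad p q * (∑ u, |x u| ^ p) ^ ((r : ℝ) / p)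
      * (∑ v, |y v| ^ q) ^ ((s : ℝ) / q) := by
  have hp0 : 0 < p := lt_of_lt_of_le one_pos hp
  have hq0 : 0 < q := lt_of_lt_of_le one_pos hq
  set A := ∑ u, |x u| ^ p with hAdef
  set B := ∑ v, |y v| ^ q with hBdef
  have hA0 : 0 ≤ A := Finset.sum_nonneg fun u _ => Real.rpow_nonneg (abs_nonneg _) _
  have hB0 : 0 ≤ B := Finset.sum_nonneg fun v _ => Real.rpow_nonneg (abs_nonneg _) _
  have hsr : 0 ≤ G.specRad p q := G.specRad_nonneg hm hn hp hq
  by_cases hrA : r ≠ 0 ∧ A = 0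
  · have hpoly : G.polyForm x y = 0 := by
      apply Finset.sum_eq_zero
      intro e _
      obtain ⟨u, hu⟩ : (G.tail e).Nonempty := by
        rw [← Finset.card_pos, G.tail_card]; exact Nat.pos_of_ne_zero hrA.1
      have hxu : x u = 0 := by
        have h1 : |x u| ^ p ≤ A := by
          rw [hAdef]
          exact Finset.single_le_sum (fun i _ => Real.rpow_nonneg (abs_nonneg _) _)
            (Finset.mem_univ u)
        have h2 : |x u| ^ p = 0 :=
          le_antisymm (hrA.2 ▸ h1) (Real.rpow_nonneg (abs_nonneg _) _)
        exact abs_eq_zero.mp ((Real.rpow_eq_zero (abs_nonneg _) hp0.ne').mp h2)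
      rw [Finset.prod_eq_zero hu hxu, zero_mul]
    rw [hpoly, hrA.2, Real.zero_rpow]
    · rw [mul_zero, zero_mul]
    · have : (r : ℝ) ≠ 0 := Nat.cast_ne_zero.mpr hrA.1
      positivity
  by_cases hsB : s ≠ 0 ∧ B = 0
  · have hpoly : G.polyForm x y = 0 := by
      apply Finset.sum_eq_zero
      intro e _
      obtain ⟨v, hv⟩ : (G.head e).Nonempty := by
        rw [← Finset.card_pos, G.head_card]; exact Nat.pos_of_ne_zero hsB.1
      have hyv : y v = 0 := by
        have h1 : |y v| ^ q ≤ B := by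
          rw [hBdef]
          exact Finset.single_le_sum (fun i _ => Real.rpow_nonneg (abs_nonneg _) _)
            (Finset.mem_univ v)
        have h2 : |y v| ^ q = 0 :=
          le_antisymm (hsB.2 ▸ h1) (Real.rpow_nonneg (abs_nonneg _) _)
        exact abs_eq_zero.mp ((Real.rpow_eq_zero (abs_nonneg _) hq0.ne').mp h2)
      rw [Finset.prod_eq_zero hv hyv, mul_zero]
    rw [hpoly, hsB.2, Real.zero_rpow]
    · rw [mul_zero]
    · have : (s : ℝ) ≠ 0 := Nat.cast_ne_zero.mpr hsB.1
      positivity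
  · push_neg at hrA hsB
    have hAr : A = 0 → r = 0 := fun h => by
      by_contra hr; exact (hrA hr) h
    have hBs : B = 0 → s = 0 := fun h => by
      by_contra hs; exact (hsB hs) h
    obtain ⟨x', hx'1, hx'2, -⟩ := exists_scaled hm hp x hAr
    obtain ⟨y', hy'1, hy'2, -⟩ := exists_scaled hn hq y hBs
    have key : G.polyForm x y
        = A ^ ((r : ℝ) / p) * B ^ ((s : ℝ) / q) * G.polyForm x' y' := by
      unfold polyForm
      rw [Finset.mul_sum]
      apply Finset.sum_congr rfl
      intro e _
      rw [hx'2 _ (G.tail_card e), hy'2 _ (G.head_card e)]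
      ring
    have hmem : G.polyForm x' y' ∈
        {z | ∃ x y, pnorm p x = 1 ∧ pnorm q y = 1 ∧ z = G.polyForm x y} :=
      ⟨x', y', hx'1, hy'1, rfl⟩
    have hle : G.polyForm x' y' ≤ G.specRad p q := le_csSup (G.bddAbove_spec hp hq) hmem
    have hC : 0 ≤ A ^ ((r : ℝ) / p) * B ^ ((s : ℝ) / q) :=
      mul_nonneg (Real.rpow_nonneg hA0 _) (Real.rpow_nonneg hB0 _)
    calc G.polyForm x y = A ^ ((r : ℝ) / p) * B ^ ((s : ℝ) / q) * G.polyForm x' y' := key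
      _ ≤ A ^ ((r : ℝ) / p) * B ^ ((s : ℝ) / q) * G.specRad p q :=
          mul_le_mul_of_nonneg_left hle hC
      _ = G.specRad p q * A ^ ((r : ℝ) / p) * B ^ ((s : ℝ) / q) := by ring

end DirHypergraph

theorem specRad_eq_max_components (m n N k r s : ℕ) (hm : 0 < m) (hn : 0 < n)
    (hk : 0 < k) (G : DirHypergraph m n (Fin N) r s)
    (p q : ℝ) (hp : 1 ≤ p) (hq : 1 ≤ q)
    (he : 1 ≤ (r : ℝ) / p + (s : ℝ) / q)
    (c : Fin N → Fin k)
    (hcover : ∀ i, ∃ e, c e = i)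
    (hsep : ∀ e f, (∃ a, G.memArc a e ∧ G.memArc a f) → c e = c f)
    (hconn : ∀ i, (G.restrict c i).Connected) :
    G.specRad p q =
      Finset.univ.sup' ⟨(⟨0, hk⟩ : Fin k), Finset.mem_univ _⟩
        (fun i => (G.restrict c i).specRad p q) := by
  classical
  have hp0 : 0 < p := lt_of_lt_of_le one_pos hp
  have hq0 : 0 < q := lt_of_lt_of_le one_pos hq
  have hα : 0 ≤ (r : ℝ) / p := div_nonneg (Nat.cast_nonneg r) hp0.le
  have hβ : 0 ≤ (s : ℝ) / q := div_nonneg (Nat.cast_nonneg s) hq0.le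
  set i0 : Fin k := ⟨0, hk⟩ with hi0
  set M := Finset.univ.sup' ⟨i0, Finset.mem_univ _⟩
    (fun i => (G.restrict c i).specRad p q) with hMdef
  have hMle : ∀ i : Fin k, (G.restrict c i).specRad p q ≤ M := by
    intro i
    rw [hMdef]
    exact Finset.le_sup' (fun j => (G.restrict c j).specRad p q) (Finset.mem_univ i)
  have hM0 : 0 ≤ M :=
    le_trans ((G.restrict c i0).specRad_nonneg hm hn hp hq) (hMle i0)
  set T : Fin k → Finset (Fin m) :=
    fun i => Finset.univ.filter fun u => ∃ e, c e = i ∧ u ∈ G.tail e with hT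
  set Hs : Fin k → Finset (Fin n) :=
    fun i => Finset.univ.filter fun v => ∃ e, c e = i ∧ v ∈ G.head e with hHs
  have hTmem : ∀ (i : Fin k) (e : Fin N), c e = i → ∀ u ∈ G.tail e, u ∈ T i := by
    intro i e hce u hu
    simp only [hT, Finset.mem_filter, Finset.mem_univ, true_and]
    exact ⟨e, hce, hu⟩
  have hHmem : ∀ (i : Fin k) (e : Fin N), c e = i → ∀ v ∈ G.head e, v ∈ Hs i := by
    intro i e hce v hv
    simp only [hHs, Finset.mem_filter, Finset.mem_univ, true_and]
    exact ⟨e, hce, hv⟩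
  have hTdisj : ∀ i j : Fin k, i ≠ j → Disjoint (T i) (T j) := by
    intro i j hij
    rw [Finset.disjoint_left]
    intro u hui huj
    simp only [hT, Finset.mem_filter, Finset.mem_univ, true_and] at hui huj
    obtain ⟨e, hce, hue⟩ := hui
    obtain ⟨f, hcf, huf⟩ := huj
    exact hij (by rw [← hce, ← hcf]; exact hsep e f ⟨Sum.inl u, hue, huf⟩)
  have hHdisj : ∀ i j : Fin k, i ≠ j → Disjoint (Hs i) (Hs j) := by
    intro i j hij
    rw [Finset.disjoint_left]
    intro v hvi hvj
    simp only [hHs, Finset.mem_filter, Finset.mem_univ, true_and] at hvi hvj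
    obtain ⟨e, hce, hve⟩ := hvi
    obtain ⟨f, hcf, hvf⟩ := hvj
    exact hij (by rw [← hce, ← hcf]; exact hsep e f ⟨Sum.inr v, hve, hvf⟩)
  have hdec : ∀ (x : Fin m → ℝ) (y : Fin n → ℝ),
      G.polyForm x y = ∑ i, (G.restrict c i).polyForm x y := by
    intro x y
    simp only [DirHypergraph.polyForm, DirHypergraph.restrict]
    exact (Fintype.sum_fiberwise c _).symm
  refine le_antisymm ?_ ?_
  · apply Real.sSup_le _ hM0
    rintro z ⟨x, y, hx, hy, rfl⟩
    have hxa : ∀ i : Fin k, (G.restrict c i).polyForm x y ≤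
        M * ((∑ u ∈ T i, |x u| ^ p) ^ ((r : ℝ) / p)
          * (∑ v ∈ Hs i, |y v| ^ q) ^ ((s : ℝ) / q)) := by
      intro i
      set xt : Fin m → ℝ := fun u => if u ∈ T i then x u else 0 with hxt
      set yt : Fin n → ℝ := fun v => if v ∈ Hs i then y v else 0 with hyt
      have hs1 : (G.restrict c i).polyForm x y = (G.restrict c i).polyForm xt yt := by
        apply Finset.sum_congr rfl
        intro e _
        congr 1
        · exact Finset.prod_congr rfl fun u hu => by
            rw [hxt]; simp only [hTmem i e.1 e.2 u hu, if_true]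
        · exact Finset.prod_congr rfl fun v hv => by
            rw [hyt]; simp only [hHmem i e.1 e.2 v hv, if_true]
      have hs2 : ∑ u, |xt u| ^ p = ∑ u ∈ T i, |x u| ^ p := by
        have h1 : ∀ u : Fin m, |xt u| ^ p = if u ∈ T i then |x u| ^ p else 0 := by
          intro u
          rw [hxt]
          by_cases h : u ∈ T i <;> simp [h, Real.zero_rpow hp0.ne']
        rw [Finset.sum_congr rfl fun u _ => h1 u, Finset.sum_ite_mem, Finset.univ_inter]
      have hs3 : ∑ v, |yt v| ^ q = ∑ v ∈ Hs i, |y v| ^ q := by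
        have h1 : ∀ v : Fin n, |yt v| ^ q = if v ∈ Hs i then |y v| ^ q else 0 := by
          intro v
          rw [hyt]
          by_cases h : v ∈ Hs i <;> simp [h, Real.zero_rpow hq0.ne']
        rw [Finset.sum_congr rfl fun v _ => h1 v, Finset.sum_ite_mem, Finset.univ_inter]
      have hC0 : 0 ≤ (∑ u ∈ T i, |x u| ^ p) ^ ((r : ℝ) / p)
          * (∑ v ∈ Hs i, |y v| ^ q) ^ ((s : ℝ) / q) :=
        mul_nonneg
          (Real.rpow_nonneg (Finset.sum_nonneg fun u _ => Real.rpow_nonneg (abs_nonneg _) _) _)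
          (Real.rpow_nonneg (Finset.sum_nonneg fun v _ => Real.rpow_nonneg (abs_nonneg _) _) _)
      calc (G.restrict c i).polyForm x y = (G.restrict c i).polyForm xt yt := hs1
        _ ≤ (G.restrict c i).specRad p q * (∑ u, |xt u| ^ p) ^ ((r : ℝ) / p)
            * (∑ v, |yt v| ^ q) ^ ((s : ℝ) / q) :=
          (G.restrict c i).polyForm_le hm hn hp hq xt yt
        _ = (∑ u ∈ T i, |x u| ^ p) ^ ((r : ℝ) / p)
            * (∑ v ∈ Hs i, |y v| ^ q) ^ ((s : ℝ) / q) * (G.restrict c i).specRad p q := by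
          rw [hs2, hs3]; ring
        _ ≤ (∑ u ∈ T i, |x u| ^ p) ^ ((r : ℝ) / p)
            * (∑ v ∈ Hs i, |y v| ^ q) ^ ((s : ℝ) / q) * M :=
          mul_le_mul_of_nonneg_left (hMle i) hC0
        _ = M * ((∑ u ∈ T i, |x u| ^ p) ^ ((r : ℝ) / p)
            * (∑ v ∈ Hs i, |y v| ^ q) ^ ((s : ℝ) / q)) := by ring
    have ha0 : ∀ i : Fin k, 0 ≤ ∑ u ∈ T i, |x u| ^ p :=
      fun i => Finset.sum_nonneg fun u _ => Real.rpow_nonneg (abs_nonneg _) _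
    have hb0 : ∀ i : Fin k, 0 ≤ ∑ v ∈ Hs i, |y v| ^ q :=
      fun i => Finset.sum_nonneg fun v _ => Real.rpow_nonneg (abs_nonneg _) _
    have hsa : ∑ i, ∑ u ∈ T i, |x u| ^ p ≤ 1 := by
      rw [← Finset.sum_biUnion (fun i _ j _ hij => hTdisj i j hij)]
      rw [← DirHypergraph.sum_of_pnorm_one hp hx]
      exact Finset.sum_le_sum_of_subset_of_nonneg (Finset.subset_univ _)
        (fun u _ _ => Real.rpow_nonneg (abs_nonneg _) _)
    have hsb : ∑ i, ∑ v ∈ Hs i, |y v| ^ q ≤ 1 := by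
      rw [← Finset.sum_biUnion (fun i _ j _ hij => hHdisj i j hij)]
      rw [← DirHypergraph.sum_of_pnorm_one hq hy]
      exact Finset.sum_le_sum_of_subset_of_nonneg (Finset.subset_univ _)
        (fun v _ _ => Real.rpow_nonneg (abs_nonneg _) _)
    have ha1 : ∀ i : Fin k, ∑ u ∈ T i, |x u| ^ p ≤ 1 := by
      intro i
      refine le_trans ?_ hsa
      exact Finset.single_le_sum (fun j _ => ha0 j) (Finset.mem_univ i)
    have hb1 : ∀ i : Fin k, ∑ v ∈ Hs i, |y v| ^ q ≤ 1 := by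
      intro i
      refine le_trans ?_ hsb
      exact Finset.single_le_sum (fun j _ => hb0 j) (Finset.mem_univ i)
    set cα := (r : ℝ) / p / ((r : ℝ) / p + (s : ℝ) / q) with hcα
    set cβ := (s : ℝ) / q / ((r : ℝ) / p + (s : ℝ) / q) with hcβ
    have hsum0 : 0 < (r : ℝ) / p + (s : ℝ) / q := lt_of_lt_of_le one_pos he
    have hcα0 : 0 ≤ cα := div_nonneg hα hsum0.le
    have hcβ0 : 0 ≤ cβ := div_nonneg hβ hsum0.le
    have hcαβ : cα + cβ = 1 := by
      rw [hcα, hcβ, ← add_div, div_self hsum0.ne']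
    calc G.polyForm x y = ∑ i, (G.restrict c i).polyForm x y := hdec x y
      _ ≤ ∑ i, M * ((∑ u ∈ T i, |x u| ^ p) ^ ((r : ℝ) / p)
            * (∑ v ∈ Hs i, |y v| ^ q) ^ ((s : ℝ) / q)) :=
        Finset.sum_le_sum fun i _ => hxa i
      _ ≤ ∑ i, M * (cα * (∑ u ∈ T i, |x u| ^ p) + cβ * (∑ v ∈ Hs i, |y v| ^ q)) := by
        apply Finset.sum_le_sum
        intro i _
        exact mul_le_mul_of_nonneg_left
          (DirHypergraph.young_aux (ha0 i) (ha1 i) (hb0 i) (hb1 i) hα hβ he) hM0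
      _ = M * (cα * ∑ i, ∑ u ∈ T i, |x u| ^ p + cβ * ∑ i, ∑ v ∈ Hs i, |y v| ^ q) := by
        rw [← Finset.mul_sum]
        congr 1
        rw [Finset.sum_add_distrib, ← Finset.mul_sum, ← Finset.mul_sum]
      _ ≤ M * 1 := by
        apply mul_le_mul_of_nonneg_left _ hM0
        nlinarith
      _ = M := mul_one M
  · apply Finset.sup'_le
    intro i _
    have hG0 := G.specRad_nonneg hm hn hp hq
    apply Real.sSup_le _ hG0
    rintro z ⟨x, y, hx, hy, rfl⟩
    rcases le_or_gt ((G.restrict c i).polyForm x y) 0 with hz | hz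
    · exact hz.trans hG0
    set xt : Fin m → ℝ := fun u => if u ∈ T i then x u else 0 with hxt
    set yt : Fin n → ℝ := fun v => if v ∈ Hs i then y v else 0 with hyt
    have hsupp : (G.restrict c i).polyForm xt yt = (G.restrict c i).polyForm x y := by
      apply Finset.sum_congr rfl
      intro e _
      congr 1
      · exact Finset.prod_congr rfl fun u hu => by
          rw [hxt]; simp only [hTmem i e.1 e.2 u hu, if_true]
      · exact Finset.prod_congr rfl fun v hv => by
          rw [hyt]; simp only [hHmem i e.1 e.2 v hv, if_true]
    set a := ∑ u, |xt u| ^ p with ha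
    set b := ∑ v, |yt v| ^ q with hb
    have ha0 : 0 ≤ a := Finset.sum_nonneg fun u _ => Real.rpow_nonneg (abs_nonneg _) _
    have hb0 : 0 ≤ b := Finset.sum_nonneg fun v _ => Real.rpow_nonneg (abs_nonneg _) _
    have ha1 : a ≤ 1 := by
      rw [ha, ← DirHypergraph.sum_of_pnorm_one hp hx]
      apply Finset.sum_le_sum
      intro u _
      apply Real.rpow_le_rpow (abs_nonneg _) _ hp0.le
      rw [hxt]
      by_cases h : u ∈ T i <;> simp [h]
    have hb1 : b ≤ 1 := by
      rw [hb, ← DirHypergraph.sum_of_pnorm_one hq hy]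
      apply Finset.sum_le_sum
      intro v _
      apply Real.rpow_le_rpow (abs_nonneg _) _ hq0.le
      rw [hyt]
      by_cases h : v ∈ Hs i <;> simp [h]
    have hAr : a = 0 → r = 0 := by
      intro h
      by_contra hr
      have h0 : (G.restrict c i).polyForm xt yt = 0 := by
        apply Finset.sum_eq_zero
        intro e _
        obtain ⟨u, hu⟩ : ((G.restrict c i).tail e).Nonempty := by
          rw [← Finset.card_pos, (G.restrict c i).tail_card]
          exact Nat.pos_of_ne_zero hr
        have hxu : xt u = 0 := by
          have h1 : |xt u| ^ p ≤ a :=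
            Finset.single_le_sum (fun j _ => Real.rpow_nonneg (abs_nonneg _) _)
              (Finset.mem_univ u)
          have h2 : |xt u| ^ p = 0 :=
            le_antisymm (h ▸ h1) (Real.rpow_nonneg (abs_nonneg _) _)
          exact abs_eq_zero.mp ((Real.rpow_eq_zero (abs_nonneg _) hp0.ne').mp h2)
        rw [Finset.prod_eq_zero hu hxu, zero_mul]
      rw [hsupp] at h0
      linarith
    have hBs : b = 0 → s = 0 := by
      intro h
      by_contra hs'
      have h0 : (G.restrict c i).polyForm xt yt = 0 := by
        apply Finset.sum_eq_zero
        intro e _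
        obtain ⟨v, hv⟩ : ((G.restrict c i).head e).Nonempty := by
          rw [← Finset.card_pos, (G.restrict c i).head_card]
          exact Nat.pos_of_ne_zero hs'
        have hyv : yt v = 0 := by
          have h1 : |yt v| ^ q ≤ b :=
            Finset.single_le_sum (fun j _ => Real.rpow_nonneg (abs_nonneg _) _)
              (Finset.mem_univ v)
          have h2 : |yt v| ^ q = 0 :=
            le_antisymm (h ▸ h1) (Real.rpow_nonneg (abs_nonneg _) _)
          exact abs_eq_zero.mp ((Real.rpow_eq_zero (abs_nonneg _) hq0.ne').mp h2)
        rw [Finset.prod_eq_zero hv hyv, mul_zero]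
      rw [hsupp] at h0
      linarith
    have hrs : r ≠ 0 ∨ s ≠ 0 := by
      by_contra hcon
      push_neg at hcon
      rw [hcon.1, hcon.2] at he
      norm_num at he
    obtain ⟨x', hx'1, hx'2, hx'3⟩ := DirHypergraph.exists_scaled hm hp xt hAr
    obtain ⟨y', hy'1, hy'2, hy'3⟩ := DirHypergraph.exists_scaled hn hq yt hBs
    have key : (G.restrict c i).polyForm x y
        = a ^ ((r : ℝ) / p) * b ^ ((s : ℝ) / q) * (G.restrict c i).polyForm x' y' := by
      rw [← hsupp]
      simp only [DirHypergraph.polyForm]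
      rw [Finset.mul_sum]
      apply Finset.sum_congr rfl
      intro e _
      rw [hx'2 _ ((G.restrict c i).tail_card e), hy'2 _ ((G.restrict c i).head_card e)]
      rw [← ha, ← hb]
      ring
    have hcross : ∀ j, j ≠ i → (G.restrict c j).polyForm x' y' = 0 := by
      intro j hj
      apply Finset.sum_eq_zero
      intro e _
      by_cases hr : r = 0
      · have hs' : s ≠ 0 := by
          rcases hrs with h | h
          · exact absurd hr h
          · exact h
        obtain ⟨v, hv⟩ : ((G.restrict c j).head e).Nonempty := by
          rw [← Finset.card_pos, (G.restrict c j).head_card]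
          exact Nat.pos_of_ne_zero hs'
        have hvnot : v ∉ Hs i := by
          intro hmem
          simp only [hHs, Finset.mem_filter, Finset.mem_univ, true_and] at hmem
          obtain ⟨f, hcf, hvf⟩ := hmem
          exact hj (by rw [← e.2, ← hcf]; exact hsep e.1 f ⟨Sum.inr v, hv, hvf⟩)
        have hy0 : yt v = 0 := by rw [hyt]; simp [hvnot]
        rw [Finset.prod_eq_zero hv (hy'3 hs' v hy0), mul_zero]
      · obtain ⟨u, hu⟩ : ((G.restrict c j).tail e).Nonempty := by
          rw [← Finset.card_pos, (G.restrict c j).tail_card]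
          exact Nat.pos_of_ne_zero hr
        have hunot : u ∉ T i := by
          intro hmem
          simp only [hT, Finset.mem_filter, Finset.mem_univ, true_and] at hmem
          obtain ⟨f, hcf, huf⟩ := hmem
          exact hj (by rw [← e.2, ← hcf]; exact hsep e.1 f ⟨Sum.inl u, hu, huf⟩)
        have hx0 : xt u = 0 := by rw [hxt]; simp [hunot]
        rw [Finset.prod_eq_zero hu (hx'3 hr u hx0), zero_mul]
    have hdecomp : G.polyForm x' y' = (G.restrict c i).polyForm x' y' := by
      rw [hdec x' y']
      exact Finset.sum_eq_single i (fun j _ hj => hcross j hj)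
        (fun h => absurd (Finset.mem_univ i) h)
    have hmem : G.polyForm x' y' ∈
        {z | ∃ x y, DirHypergraph.pnorm p x = 1 ∧ DirHypergraph.pnorm q y = 1
          ∧ z = G.polyForm x y} :=
      ⟨x', y', hx'1, hy'1, rfl⟩
    have hle : (G.restrict c i).polyForm x' y' ≤ G.specRad p q :=
      hdecomp ▸ le_csSup (G.bddAbove_spec hp hq) hmem
    have hCa : a ^ ((r : ℝ) / p) ≤ 1 := Real.rpow_le_one ha0 ha1 hα
    have hCb : b ^ ((s : ℝ) / q) ≤ 1 := Real.rpow_le_one hb0 hb1 hβ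
    have hCa0 : 0 ≤ a ^ ((r : ℝ) / p) := Real.rpow_nonneg ha0 _
    have hCb0 : 0 ≤ b ^ ((s : ℝ) / q) := Real.rpow_nonneg hb0 _
    have hC1 : a ^ ((r : ℝ) / p) * b ^ ((s : ℝ) / q) ≤ 1 := by nlinarith
    have hC0 : 0 ≤ a ^ ((r : ℝ) / p) * b ^ ((s : ℝ) / q) := mul_nonneg hCa0 hCb0
    have hP' : 0 < (G.restrict c i).polyForm x' y' := by nlinarith
    have hfin : (G.restrict c i).polyForm x y ≤ (G.restrict c i).polyForm x' y' := by
      nlinarith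
    exact hfin.trans hle
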